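/- arXiv:2407.04436 — 2 statements merged into one kernel-verified Lean document; each statement's English description precedes it below -/
import Mathlib

section
/- Let x̄ ≠ x* and suppose there exist μ ∈ ℝ^m_+ and σ ∈ ℝ^p_+ such that Σ_{k=1}^m μ_k ∇T_k(x̄) + Σ_{i=1}^p σ_i ∇g_i(x̄) = 0 and μ_k T_k(x̄) = 0 for all k ∈ {1,…,m}. Then, setting γ_k = μ_k / ‖x̄ − x*‖^{2η} for k ∈ {1,…,m}, one has γ ∈ ℝ^m_+ and Σ_{k=1}^m γ_k ∇f_k(x̄) + Σ_{i=1}^p σ_i ∇g_i(x̄) = 0; moreover, if (μ, σ) ≠ 0 then (γ, σ) ≠ 0. -/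
/-- From multipliers for the tunneling gradients one obtains multipliers
`γ_k = μ_k / ‖x̄ − x*‖^{2η}` for the original gradients, preserving nonnegativity,
stationarity, and nontriviality. -/
theorem tunneling_multipliers_transfer
    {n m p : ℕ}
    (f : Fin m → EuclideanSpace ℝ (Fin n) → ℝ)
    (g : Fin p → EuclideanSpace ℝ (Fin n) → ℝ)
    (hf : ∀ k, ContDiff ℝ 1 (f k)) (hg : ∀ i, ContDiff ℝ 1 (g i))
    (η : ℝ) (hη : 0 < η)
    (xstar : EuclideanSpace ℝ (Fin n))
    (T : Fin m → EuclideanSpace ℝ (Fin n) → ℝ)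
    (hT : ∀ k x, x ≠ xstar → T k x = (f k x - f k xstar) / ‖x - xstar‖ ^ (2 * η))
    (xbar : EuclideanSpace ℝ (Fin n)) (hne : xbar ≠ xstar)
    (μ : Fin m → ℝ) (σ : Fin p → ℝ)
    (hμ : ∀ k, 0 ≤ μ k) (hσ : ∀ i, 0 ≤ σ i)
    (hstat : ∑ k, μ k • gradient (T k) xbar + ∑ i, σ i • gradient (g i) xbar = 0)
    (hcompT : ∀ k, μ k * T k xbar = 0) :
    ∃ γ : Fin m → ℝ,
      γ = (fun k => μ k / ‖xbar - xstar‖ ^ (2 * η)) ∧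
      (∀ k, 0 ≤ γ k) ∧
      ∑ k, γ k • gradient (f k) xbar + ∑ i, σ i • gradient (g i) xbar = 0 ∧
      (¬(μ = 0 ∧ σ = 0) → ¬(γ = 0 ∧ σ = 0)) := by
  set c : ℝ := ‖xbar - xstar‖ ^ (2 * η) with hc
  have hnorm_pos : 0 < ‖xbar - xstar‖ := by
    rw [norm_pos_iff]
    exact sub_ne_zero.mpr hne
  have hcpos : 0 < c := Real.rpow_pos_of_pos hnorm_pos _
  have hcne : c ≠ 0 := ne_of_gt hcpos
  refine ⟨fun k => μ k / c, rfl, fun k => div_nonneg (hμ k) hcpos.le, ?_, ?_⟩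
  · -- stationarity
    have key : ∀ k, (μ k / c) • gradient (f k) xbar = μ k • gradient (T k) xbar := by
      intro k
      rcases eq_or_ne (μ k) 0 with h0 | h0
      · simp [h0]
      · -- from complementarity, f k xbar = f k xstar
        have hfz : f k xbar = f k xstar := by
          have h1 := hcompT k
          rw [hT k xbar hne] at h1
          have h2 : (f k xbar - f k xstar) / c = 0 := by
            rcases mul_eq_zero.mp h1 with h | h
            · exact absurd h h0
            · exact h
          have := (div_eq_zero_iff.mp h2).resolve_right hcne
          linarith
        -- compute gradient of T k at xbar
        have hdiff_f : DifferentiableAt ℝ (f k) xbar :=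
          ((hf k).differentiable one_ne_zero).differentiableAt
        have hda : DifferentiableAt ℝ (fun x => f k x - f k xstar) xbar :=
          hdiff_f.sub_const _
        have hdsub : DifferentiableAt ℝ (fun x : EuclideanSpace ℝ (Fin n) => x - xstar) xbar :=
          differentiableAt_id.sub_const _
        have hdnorm : DifferentiableAt ℝ (fun x : EuclideanSpace ℝ (Fin n) => ‖x - xstar‖) xbar :=
          hdsub.norm ℝ (sub_ne_zero.mpr hne)
        have hdrpow : DifferentiableAt ℝ
            (fun x : EuclideanSpace ℝ (Fin n) => ‖x - xstar‖ ^ (2 * η)) xbar :=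
          hdnorm.rpow_const (Or.inl (ne_of_gt hnorm_pos))
        have hdb : DifferentiableAt ℝ
            (fun x : EuclideanSpace ℝ (Fin n) => (‖x - xstar‖ ^ (2 * η))⁻¹) xbar :=
          hdrpow.inv hcne
        have heq : T k =ᶠ[nhds xbar]
            fun x => (f k x - f k xstar) * (‖x - xstar‖ ^ (2 * η))⁻¹ := by
          filter_upwards [eventually_ne_nhds hne] with x hx
          rw [hT k x hx, div_eq_mul_inv]
        have hfd : fderiv ℝ (T k) xbar = c⁻¹ • fderiv ℝ (f k) xbar := by
          rw [heq.fderiv_eq, fderiv_fun_mul hda hdb, fderiv_sub_const]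
          simp [hfz, hc]
        have hgrad : gradient (T k) xbar = c⁻¹ • gradient (f k) xbar := by
          rw [gradient, gradient, hfd, map_smulₛₗ]
          simp
        rw [hgrad, smul_smul, div_eq_mul_inv]
    calc ∑ k, (μ k / c) • gradient (f k) xbar + ∑ i, σ i • gradient (g i) xbar
        = ∑ k, μ k • gradient (T k) xbar + ∑ i, σ i • gradient (g i) xbar := by
          rw [Finset.sum_congr rfl (fun k _ => key k)]
      _ = 0 := hstat
  · -- nontriviality
    rintro h ⟨hγ, hσ0⟩
    apply h
    refine ⟨funext fun k => ?_, hσ0⟩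
    have : μ k / c = 0 := congrFun hγ k
    rcases div_eq_zero_iff.mp this with h | h
    · exact h
    · exact absurd h hcne
end

section
/- (Fritz John necessary condition) If a feasible point x* is a weak efficient solution of (MOP_C), then there exists (λ, μ) ∈ ℝ^m_+ × ℝ^p_+ with (λ, μ) ≠ 0 such that Σ_{k=1}^m λ_k ∇f_k(x*) + Σ_{i=1}^p μ_i ∇g_i(x*) = 0 and μ_i g_i(x*) = 0 for all i ∈ {1,…,p}. -/
open Filter Set Topology

private lemma fj_descent {h : ℝ → ℝ} {c : ℝ} (hd : HasDerivAt h c 0) (hc : c < 0) :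
    ∀ᶠ t in 𝓝[>] (0:ℝ), h t < h 0 := by
  have hs := hasDerivAt_iff_tendsto_slope.mp hd
  have h2 : ∀ᶠ t in 𝓝[≠] (0:ℝ), slope h 0 t < 0 := hs (Iio_mem_nhds hc)
  have hle : 𝓝[>] (0:ℝ) ≤ 𝓝[≠] (0:ℝ) := nhdsWithin_mono _ (fun t ht => ne_of_gt ht)
  filter_upwards [hle h2, self_mem_nhdsWithin] with t hst (ht : 0 < t)
  have : (h t - h 0) / (t - 0) < 0 := by simpa [slope_def_field, div_eq_div_iff] using hst
  rw [sub_zero] at this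
  have h4 := mul_neg_of_neg_of_pos this ht
  rw [div_mul_cancel₀ _ (ne_of_gt ht)] at h4
  linarith

private lemma fj_dirderiv {n : ℕ} {f : EuclideanSpace ℝ (Fin n) → ℝ} (hf : ContDiff ℝ 1 f)
    (x d : EuclideanSpace ℝ (Fin n)) :
    HasDerivAt (fun t : ℝ => f (x + t • d)) (inner ℝ (gradient f x) d : ℝ) 0 := by
  have hdf : HasFDerivAt f (fderiv ℝ f x) x :=
    (hf.differentiable one_ne_zero).differentiableAt.hasFDerivAt
  have hline : HasDerivAt (fun t : ℝ => x + t • d) d 0 := by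
    simpa using ((hasDerivAt_id (0:ℝ)).smul_const d).const_add x
  have hdf' : HasFDerivAt f (fderiv ℝ f x) ((fun t : ℝ => x + t • d) 0) := by
    simpa using hdf
  have := hdf'.comp_hasDerivAt 0 hline
  rw [inner_gradient_left]
  exact this

/-- Fritz John necessary condition: a weak efficient solution of
(MOP_C) admits nonzero nonnegative multipliers satisfying stationarity and
complementary slackness. -/
theorem fritz_john_necessary_condition
    {n m p : ℕ} (hm : 2 ≤ m)
    (f : Fin m → EuclideanSpace ℝ (Fin n) → ℝ)
    (g : Fin p → EuclideanSpace ℝ (Fin n) → ℝ)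
    (hf : ∀ k, ContDiff ℝ 1 (f k)) (hg : ∀ i, ContDiff ℝ 1 (g i))
    (xstar : EuclideanSpace ℝ (Fin n)) (hfeas : ∀ i, g i xstar ≤ 0)
    -- x* is a weak efficient solution of (MOP_C):
    (hweff : ¬∃ x : EuclideanSpace ℝ (Fin n),
      (∀ i, g i x ≤ 0) ∧ ∀ k, f k x < f k xstar) :
    ∃ (lam : Fin m → ℝ) (μ : Fin p → ℝ),
      (∀ k, 0 ≤ lam k) ∧ (∀ i, 0 ≤ μ i) ∧ ¬(lam = 0 ∧ μ = 0) ∧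
      ∑ k, lam k • gradient (f k) xstar + ∑ i, μ i • gradient (g i) xstar = 0 ∧
      (∀ i, μ i * g i xstar = 0) := by
  classical
  set v : Fin m ⊕ {i : Fin p // g i xstar = 0} → EuclideanSpace ℝ (Fin n) := fun j =>
    Sum.elim (fun k => gradient (f k) xstar) (fun a => gradient (g a.1) xstar) j with hv
  by_cases h0 : (0 : EuclideanSpace ℝ (Fin n)) ∈ convexHull ℝ (Set.range v)
  · -- extract convex combination
    rw [convexHull_range_eq_exists_affineCombination] at h0
    obtain ⟨s, w, hw0, hw1, hcomb⟩ := h0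
    rw [Finset.affineCombination_eq_linear_combination s v w hw1] at hcomb
    set w' : Fin m ⊕ {i : Fin p // g i xstar = 0} → ℝ := fun j => if j ∈ s then w j else 0 with hw'
    have hw'0 : ∀ j, 0 ≤ w' j := by
      intro j; simp only [hw']
      split
      · exact hw0 j ‹_›
      · exact le_refl 0
    have hw'sum : ∑ j, w' j = 1 := by
      rw [hw', Finset.sum_ite_mem, Finset.univ_inter, hw1]
    have hw'comb : ∑ j, w' j • v j = 0 := by
      rw [hw']
      rw [show ∑ j, (if j ∈ s then w j else 0) • v j
          = ∑ j, (if j ∈ s then w j • v j else 0) by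
        refine Finset.sum_congr rfl fun j _ => ?_
        split <;> simp]
      rw [Finset.sum_ite_mem, Finset.univ_inter, hcomb]
    refine ⟨fun k => w' (Sum.inl k), fun i => if h : g i xstar = 0 then w' (Sum.inr ⟨i, h⟩) else 0,
      fun k => hw'0 _, fun i => ?_, ?_, ?_, fun i => ?_⟩
    · by_cases h : g i xstar = 0 <;> simp [h, hw'0]
    · rintro ⟨hlam, hmu⟩
      have : ∑ j, w' j = 0 := by
        rw [Fintype.sum_sum_type]
        have h1 : ∀ k, w' (Sum.inl k) = 0 := fun k => congrFun hlam k
        have h2 : ∀ a : {i : Fin p // g i xstar = 0}, w' (Sum.inr a) = 0 := by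
          intro a
          have := congrFun hmu a.1
          simp only [Pi.zero_apply, dif_pos a.2] at this
          simpa using this
        simp [h1, h2]
      rw [hw'sum] at this; norm_num at this
    · have hμsum : ∑ i : Fin p, (if h : g i xstar = 0 then w' (Sum.inr ⟨i, h⟩) else 0)
          • gradient (g i) xstar = ∑ a : {i : Fin p // g i xstar = 0}, w' (Sum.inr a) • gradient (g a.1) xstar := by
        rw [← Finset.sum_filter_of_ne (p := fun i => g i xstar = 0)
          (fun i _ hne => by by_contra h; rw [dif_neg h, zero_smul] at hne; exact hne rfl)]
        rw [Finset.sum_subtype (p := fun i => g i xstar = 0)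
          (Finset.univ.filter fun i => g i xstar = 0)
          (fun x => by simp) (fun i => (if h : g i xstar = 0 then w' (Sum.inr ⟨i, h⟩) else 0)
            • gradient (g i) xstar)]
        refine Finset.sum_congr rfl fun a _ => ?_
        rw [dif_pos a.2]
      have h3 := hw'comb
      rw [Fintype.sum_sum_type] at h3
      simp only [hv, Sum.elim_inl, Sum.elim_inr] at h3
      rw [hμsum]
      simpa using h3
    · by_cases h : g i xstar = 0 <;> simp [h]
  · -- separation
    have hfin : (Set.range v).Finite := Set.finite_range v
    have hclosed : IsClosed (convexHull ℝ (Set.range v)) :=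
      (hfin.isCompact_convexHull ℝ).isClosed
    obtain ⟨L, u, hL0, hLb⟩ := geometric_hahn_banach_point_closed
      (convex_convexHull ℝ _) hclosed h0
    have hu : 0 < u := by simpa using hL0
    set d := -((InnerProductSpace.toDual ℝ (EuclideanSpace ℝ (Fin n))).symm L) with hd
    have hneg : ∀ j, (inner ℝ (v j) d : ℝ) < 0 := by
      intro j
      have hj : u < L (v j) := hLb _ (subset_convexHull ℝ _ (Set.mem_range_self j))
      have : (inner ℝ ((InnerProductSpace.toDual ℝ (EuclideanSpace ℝ (Fin n))).symm L) (v j) : ℝ) = L (v j) :=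
        InnerProductSpace.toDual_symm_apply
      rw [hd, inner_neg_right, real_inner_comm, this]
      linarith
    -- descent for objectives
    have hfdec : ∀ k, ∀ᶠ t in 𝓝[>] (0:ℝ), f k (xstar + t • d) < f k xstar := by
      intro k
      have := fj_descent (fj_dirderiv (hf k) xstar d) (hneg (Sum.inl k))
      simpa using this
    have hgdec : ∀ i, ∀ᶠ t in 𝓝[>] (0:ℝ), g i (xstar + t • d) ≤ 0 := by
      intro i
      by_cases hi : g i xstar = 0
      · have := fj_descent (fj_dirderiv (hg i) xstar d) (hneg (Sum.inr ⟨i, hi⟩))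
        filter_upwards [this] with t ht
        simp only [zero_smul, add_zero] at ht
        rw [hi] at ht
        exact le_of_lt ht
      · have hlt : g i xstar < 0 := lt_of_le_of_ne (hfeas i) hi
        have hcont : Continuous fun t : ℝ => g i (xstar + t • d) :=
          (hg i).continuous.comp (continuous_const.add (continuous_id.smul continuous_const))
        have htend : Filter.Tendsto (fun t : ℝ => g i (xstar + t • d)) (𝓝 0) (𝓝 (g i xstar)) := by
          have := hcont.tendsto 0
          simpa using this
        have h5 : ∀ᶠ t in 𝓝 (0:ℝ), g i (xstar + t • d) < 0 :=
          htend.eventually (Filter.Tendsto.eventually_lt_const hlt tendsto_id)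
        exact (h5.filter_mono nhdsWithin_le_nhds).mono fun t ht => le_of_lt ht
    have hall : ∀ᶠ t in 𝓝[>] (0:ℝ),
        (∀ i, g i (xstar + t • d) ≤ 0) ∧ ∀ k, f k (xstar + t • d) < f k xstar :=
      (eventually_all.mpr hgdec).and (eventually_all.mpr hfdec)
    obtain ⟨t, hg', hf'⟩ := hall.exists
    exact absurd ⟨xstar + t • d, hg', hf'⟩ hweff
end
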